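/- arXiv:2004.09202 — 2 statements merged into one kernel-verified Lean document; each statement's English description precedes it below -/
import Mathlib

section
/- (Uniqueness via strict convexity of the weighted square loss.) Let $P_1,P_2$ be probability measures equivalent to $\mathbb{P}$, $\xi\in L^2(P_i)$, and set $\hat\eta_i=E_{P_i}[\xi|\mathcal{C}]$. For $\lambda\in(0,1)$ let $P^\lambda=\lambda P_1+(1-\lambda)P_2$, $\lambda_1=\lambda E_{P^\lambda}[\frac{dP_1}{dP^\lambda}|\mathcal{C}]$, $\lambda_2=(1-\lambda)E_{P^\lambda}[\frac{dP_2}{dP^\lambda}|\mathcal{C}]$. Then $\lambda_1+\lambda_2=1$, $E_{P^\lambda}[\xi|\mathcal{C}]=\lambda_1\hat\eta_1+\lambda_2\hat\eta_2$, and $E_{P^\lambda}[(\xi-E_{P^\lambda}[\xi|\mathcal{C}])^2]=\lambda E_{P_1}[(\xi-\hat\eta_1)^2]+(1-\lambda)E_{P_2}[(\xi-\hat\eta_2)^2]+\lambda E_{P_1}[\lambda_2^2(\hat\eta_1-\hat\eta_2)^2]+(1-\lambda)E_{P_2}[\lambda_1^2(\hat\eta_1-\hat\eta_2)^2]$. 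-/
open MeasureTheory

/-- The mixture `λ P₁ + (1-λ) P₂` of two measures. -/
noncomputable def mixMeasure {Ω : Type*} {mΩ : MeasurableSpace Ω}
    (lam : ℝ) (P1 P2 : Measure Ω) : Measure Ω :=
  ENNReal.ofReal lam • P1 + ENNReal.ofReal (1 - lam) • P2

section Aux

variable {Ω : Type*} {m : MeasurableSpace Ω} {m0 : MeasurableSpace Ω}

/-- Product of two L² functions is integrable. -/
lemma integrable_mul_of_memL2 {P : Measure Ω} {f g : Ω → ℝ}
    (hf : MemLp f 2 P) (hg : MemLp g 2 P) : Integrable (fun ω => f ω * g ω) P := by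
  have h : MemLp (f • g) 1 P := by
    exact hg.smul hf
  exact memLp_one_iff_integrable.mp h

lemma integrable_sq_of_memL2 {P : Measure Ω} {f : Ω → ℝ}
    (hf : MemLp f 2 P) : Integrable (fun ω => f ω ^ 2) P := by
  simpa [pow_two] using integrable_mul_of_memL2 hf hf

/-- The conditional expectation of an L² function is in L². -/
lemma memL2_condexp (hm : m ≤ m0) (P : Measure Ω) [IsFiniteMeasure P]
    {f : Ω → ℝ} (hf : MemLp f 2 P) : MemLp (P[f|m]) 2 P := by
  have hInt : Integrable f P := hf.integrable one_le_two
  have hae : ((condExpL2 ℝ ℝ hm (hf.toLp f) : Ω →₂[P] ℝ) : Ω → ℝ) =ᵐ[P] P[f|m] := by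
    refine ae_eq_condExp_of_forall_setIntegral_eq hm hInt
      (fun s _ hμs => integrableOn_condExpL2_of_measure_ne_top hm hμs.ne _) ?_
      (aestronglyMeasurable_condExpL2 hm _)
    intro s hs hμs
    rw [integral_condExpL2_eq_of_fin_meas_real (hm := hm) _ hs hμs.ne]
    exact setIntegral_congr_ae (hm s hs) ((MemLp.coeFn_toLp hf).mono fun x hx _ => hx)
  exact (Lp.memLp _).ae_eq hae

/-- Conditional Bayes formula. -/
lemma bayes_aux (hm : m ≤ m0) (P ν : Measure Ω) [IsFiniteMeasure P] [IsFiniteMeasure ν]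
    (hPν : P ≪ ν) {ξ : Ω → ℝ} (hξ : Integrable ξ P) :
    ν[fun ω => (P.rnDeriv ν ω).toReal * ξ ω|m]
      =ᵐ[ν] fun ω => (P[ξ|m]) ω * (ν[fun ω' => (P.rnDeriv ν ω').toReal|m]) ω := by
  set f : Ω → ℝ := fun ω => (P.rnDeriv ν ω).toReal with hf_def
  set η : Ω → ℝ := P[ξ|m] with hη_def
  have hfξ : Integrable (fun ω => f ω * ξ ω) ν := by
    simpa [smul_eq_mul] using (integrable_rnDeriv_smul_iff hPν).mpr hξ
  have hηint : Integrable η P := integrable_condExp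
  have hfη : Integrable (fun ω => f ω * η ω) ν := by
    simpa [smul_eq_mul] using (integrable_rnDeriv_smul_iff hPν).mpr hηint
  have hηf : Integrable (η * f) ν :=
    hfη.congr (Filter.Eventually.of_forall fun ω => mul_comm _ _)
  have key : ν[η * f|m] =ᵐ[ν] η * ν[f|m] :=
    condExp_mul_of_stronglyMeasurable_left stronglyMeasurable_condExp hηf
      Measure.integrable_toReal_rnDeriv
  have hgint : Integrable (η * ν[f|m]) ν := integrable_condExp.congr key
  have huniq : (η * ν[f|m]) =ᵐ[ν] ν[fun ω => f ω * ξ ω|m] := by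
    refine ae_eq_condExp_of_forall_setIntegral_eq hm hfξ
      (fun s _ _ => hgint.integrableOn) ?_
      ((stronglyMeasurable_condExp.mul stronglyMeasurable_condExp).aestronglyMeasurable)
    intro s hs hμs
    have hsm : MeasurableSet s := hm s hs
    calc ∫ ω in s, (η * ν[f|m]) ω ∂ν = ∫ ω in s, (ν[η * f|m]) ω ∂ν :=
          setIntegral_congr_ae hsm (key.mono fun ω hω _ => hω.symm)
      _ = ∫ ω in s, (η * f) ω ∂ν := setIntegral_condExp hm hηf hs
      _ = ∫ ω in s, f ω • η ω ∂ν := by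
          refine setIntegral_congr_ae hsm (Filter.Eventually.of_forall fun ω _ => ?_)
          simp [mul_comm]
      _ = ∫ ω in s, η ω ∂P := setIntegral_rnDeriv_smul hPν hsm
      _ = ∫ ω in s, ξ ω ∂P := setIntegral_condExp hm hξ hs
      _ = ∫ ω in s, f ω • ξ ω ∂ν := (setIntegral_rnDeriv_smul hPν hsm).symm
      _ = ∫ ω in s, f ω * ξ ω ∂ν := by simp [smul_eq_mul]
  filter_upwards [huniq] with ω hω
  exact hω.symm

end Aux

/-- strict-convexity identity for the weighted square loss.
With `P^λ = λP₁+(1-λ)P₂`, `λ₁ = λ E_{P^λ}[dP₁/dP^λ|C]`, `λ₂ = (1-λ) E_{P^λ}[dP₂/dP^λ|C]`,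
and `η̂ᵢ = E_{Pᵢ}[ξ|C]`: `λ₁+λ₂ = 1`, `E_{P^λ}[ξ|C] = λ₁η̂₁+λ₂η̂₂`, and
`E_{P^λ}[(ξ-E_{P^λ}[ξ|C])²] = λE_{P₁}[(ξ-η̂₁)²] + (1-λ)E_{P₂}[(ξ-η̂₂)²]
  + λE_{P₁}[λ₂²(η̂₁-η̂₂)²] + (1-λ)E_{P₂}[λ₁²(η̂₁-η̂₂)²]`. -/
theorem stmt16 {Ω : Type*} [m0 : MeasurableSpace Ω] (μ : Measure Ω) [IsProbabilityMeasure μ]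
    (P1 P2 : Measure Ω) [IsProbabilityMeasure P1] [IsProbabilityMeasure P2]
    (h1 : P1 ≪ μ) (h1' : μ ≪ P1) (h2 : P2 ≪ μ) (h2' : μ ≪ P2)
    (m : MeasurableSpace Ω) (hm : m ≤ m0)
    (ξ : Ω → ℝ) (hξ1 : MemLp ξ 2 P1) (hξ2 : MemLp ξ 2 P2)
    (lam : ℝ) (hlam : lam ∈ Set.Ioo (0 : ℝ) 1) :
    (∀ᵐ ω ∂(mixMeasure lam P1 P2),
      lam * ((mixMeasure lam P1 P2)[fun ω' => (P1.rnDeriv (mixMeasure lam P1 P2) ω').toReal | m]) ω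
        + (1 - lam) * ((mixMeasure lam P1 P2)[fun ω' => (P2.rnDeriv (mixMeasure lam P1 P2) ω').toReal | m]) ω
        = 1) ∧
    (((mixMeasure lam P1 P2)[ξ | m]) =ᵐ[mixMeasure lam P1 P2] fun ω =>
      lam * ((mixMeasure lam P1 P2)[fun ω' => (P1.rnDeriv (mixMeasure lam P1 P2) ω').toReal | m]) ω
          * (P1[ξ | m]) ω
        + (1 - lam) * ((mixMeasure lam P1 P2)[fun ω' => (P2.rnDeriv (mixMeasure lam P1 P2) ω').toReal | m]) ω
          * (P2[ξ | m]) ω) ∧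
    ((∫ ω, (ξ ω - ((mixMeasure lam P1 P2)[ξ | m]) ω) ^ 2 ∂(mixMeasure lam P1 P2))
      = lam * (∫ ω, (ξ ω - (P1[ξ | m]) ω) ^ 2 ∂P1)
        + (1 - lam) * (∫ ω, (ξ ω - (P2[ξ | m]) ω) ^ 2 ∂P2)
        + lam * (∫ ω, ((1 - lam) * ((mixMeasure lam P1 P2)[fun ω' => (P2.rnDeriv (mixMeasure lam P1 P2) ω').toReal | m]) ω) ^ 2
            * ((P1[ξ | m]) ω - (P2[ξ | m]) ω) ^ 2 ∂P1)
        + (1 - lam) * (∫ ω, (lam * ((mixMeasure lam P1 P2)[fun ω' => (P1.rnDeriv (mixMeasure lam P1 P2) ω').toReal | m]) ω) ^ 2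
            * ((P1[ξ | m]) ω - (P2[ξ | m]) ω) ^ 2 ∂P2)) := by
  obtain ⟨hl0, hl1⟩ := hlam
  have hl1' : (0:ℝ) < 1 - lam := by linarith
  set ν := mixMeasure (mΩ := m0) lam P1 P2 with hν
  have hνdef : ν = ENNReal.ofReal lam • P1 + ENNReal.ofReal (1 - lam) • P2 := rfl
  have hP : ∀ s : Set Ω, ν s = ENNReal.ofReal lam * P1 s + ENNReal.ofReal (1 - lam) * P2 s := by
    intro s
    simp [hνdef, Measure.add_apply, Measure.smul_apply, smul_eq_mul]
  have hlam0 : ENNReal.ofReal lam ≠ 0 := (ENNReal.ofReal_pos.mpr hl0).ne'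
  have hlam0' : ENNReal.ofReal (1 - lam) ≠ 0 := (ENNReal.ofReal_pos.mpr hl1').ne'
  haveI hprob : IsProbabilityMeasure ν := by
    constructor
    rw [hP, measure_univ, measure_univ, mul_one, mul_one,
      ← ENNReal.ofReal_add hl0.le hl1'.le]
    norm_num
  -- absolute continuity
  have hP1ν : P1 ≪ ν := by
    intro s hs
    rw [hP] at hs
    rcases mul_eq_zero.mp (add_eq_zero.mp hs).1 with h' | h'
    · exact absurd h' hlam0
    · exact h'
  have hP2ν : P2 ≪ ν := by
    intro s hs
    rw [hP] at hs
    rcases mul_eq_zero.mp (add_eq_zero.mp hs).2 with h' | h'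
    · exact absurd h' hlam0'
    · exact h'
  have h21 : P2 ≪ P1 := h2.trans h1'
  have h12 : P1 ≪ P2 := h1.trans h2'
  have hνP1 : ν ≪ P1 := by
    intro s hs
    rw [hP, hs, h21 hs]
    simp
  -- densities
  set f1 : Ω → ℝ := fun ω' => (P1.rnDeriv ν ω').toReal with hf1
  set f2 : Ω → ℝ := fun ω' => (P2.rnDeriv ν ω').toReal with hf2
  haveI : IsFiniteMeasure (ENNReal.ofReal lam • P1) := by
    constructor
    rw [Measure.smul_apply, smul_eq_mul]
    exact ENNReal.mul_lt_top ENNReal.ofReal_lt_top (measure_lt_top _ _)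
  haveI : IsFiniteMeasure (ENNReal.ofReal (1 - lam) • P2) := by
    constructor
    rw [Measure.smul_apply, smul_eq_mul]
    exact ENNReal.mul_lt_top ENNReal.ofReal_lt_top (measure_lt_top _ _)
  have hcomb : ∀ᵐ ω ∂ν, lam * f1 ω + (1 - lam) * f2 ω = 1 := by
    have hself : ν.rnDeriv ν =ᵐ[ν] fun _ => 1 := Measure.rnDeriv_self ν
    have hadd : (ENNReal.ofReal lam • P1 + ENNReal.ofReal (1 - lam) • P2).rnDeriv ν
        =ᵐ[ν] (ENNReal.ofReal lam • P1).rnDeriv ν + (ENNReal.ofReal (1 - lam) • P2).rnDeriv ν :=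
      Measure.rnDeriv_add _ _ _
    have hs1 : (ENNReal.ofReal lam • P1).rnDeriv ν =ᵐ[ν] ENNReal.ofReal lam • P1.rnDeriv ν :=
      Measure.rnDeriv_smul_left_of_ne_top _ _ ENNReal.ofReal_ne_top
    have hs2 : (ENNReal.ofReal (1 - lam) • P2).rnDeriv ν
        =ᵐ[ν] ENNReal.ofReal (1 - lam) • P2.rnDeriv ν :=
      Measure.rnDeriv_smul_left_of_ne_top _ _ ENNReal.ofReal_ne_top
    filter_upwards [hself, hadd, hs1, hs2, Measure.rnDeriv_lt_top P1 ν,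
      Measure.rnDeriv_lt_top P2 ν] with ω h0 ha hb hc hfin1 hfin2
    have hsum : ENNReal.ofReal lam * P1.rnDeriv ν ω + ENNReal.ofReal (1 - lam) * P2.rnDeriv ν ω
        = 1 := by
      calc ENNReal.ofReal lam * P1.rnDeriv ν ω + ENNReal.ofReal (1 - lam) * P2.rnDeriv ν ω
          = (ENNReal.ofReal lam • P1).rnDeriv ν ω
            + (ENNReal.ofReal (1 - lam) • P2).rnDeriv ν ω := by
            rw [hb, hc]; simp [smul_eq_mul]
        _ = (ENNReal.ofReal lam • P1 + ENNReal.ofReal (1 - lam) • P2).rnDeriv ν ω := ha.symm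
        _ = ν.rnDeriv ν ω := by rw [← hνdef]
        _ = 1 := h0
    have := congrArg ENNReal.toReal hsum
    rw [ENNReal.toReal_add (ENNReal.mul_ne_top ENNReal.ofReal_ne_top hfin1.ne)
        (ENNReal.mul_ne_top ENNReal.ofReal_ne_top hfin2.ne),
      ENNReal.toReal_mul, ENNReal.toReal_mul, ENNReal.toReal_ofReal hl0.le,
      ENNReal.toReal_ofReal hl1'.le, ENNReal.toReal_one] at this
    exact this
  -- measure comparison: P1 ≤ (ofReal lam)⁻¹ • ν, P2 ≤ (ofReal (1-lam))⁻¹ • ν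
  have hle1 : P1 ≤ (ENNReal.ofReal lam)⁻¹ • ν := by
    intro s
    rw [Measure.smul_apply, smul_eq_mul]
    calc P1 s = (ENNReal.ofReal lam)⁻¹ * (ENNReal.ofReal lam * P1 s) := by
          rw [← mul_assoc, ENNReal.inv_mul_cancel hlam0 ENNReal.ofReal_ne_top, one_mul]
      _ ≤ (ENNReal.ofReal lam)⁻¹ * ν s := by
          refine mul_le_mul_right ?_ _
          rw [hP]
          exact le_self_add
  have hle2 : P2 ≤ (ENNReal.ofReal (1 - lam))⁻¹ • ν := by
    intro s
    rw [Measure.smul_apply, smul_eq_mul]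
    calc P2 s = (ENNReal.ofReal (1 - lam))⁻¹ * (ENNReal.ofReal (1 - lam) * P2 s) := by
          rw [← mul_assoc, ENNReal.inv_mul_cancel hlam0' ENNReal.ofReal_ne_top, one_mul]
      _ ≤ (ENNReal.ofReal (1 - lam))⁻¹ * ν s := by
          refine mul_le_mul_right ?_ _
          rw [hP]
          exact le_add_self
  have htransfer1 : ∀ {h : Ω → ℝ}, MemLp h 2 ν → MemLp h 2 P1 := fun hh =>
    (hh.smul_measure (ENNReal.inv_ne_top.mpr hlam0)).mono_measure hle1
  have htransfer2 : ∀ {h : Ω → ℝ}, MemLp h 2 ν → MemLp h 2 P2 := fun hh =>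
    (hh.smul_measure (ENNReal.inv_ne_top.mpr hlam0')).mono_measure hle2
  -- ξ ∈ L²(ν)
  have hξν : MemLp ξ 2 ν := by
    have hmeas : AEStronglyMeasurable[m0] ξ ν := hξ1.aestronglyMeasurable.mono_ac hνP1
    refine (memLp_two_iff_integrable_sq hmeas).mpr ?_
    rw [hνdef]
    exact ((integrable_sq_of_memL2 hξ1).smul_measure ENNReal.ofReal_ne_top).add_measure
      ((integrable_sq_of_memL2 hξ2).smul_measure ENNReal.ofReal_ne_top)
  -- integral splitting
  have hint_split : ∀ {h : Ω → ℝ}, Integrable h P1 → Integrable h P2 →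
      ∫ ω, h ω ∂ν = lam * ∫ ω, h ω ∂P1 + (1 - lam) * ∫ ω, h ω ∂P2 := by
    intro h h1i h2i
    rw [hνdef, integral_add_measure (h1i.smul_measure ENNReal.ofReal_ne_top)
        (h2i.smul_measure ENNReal.ofReal_ne_top),
      integral_smul_measure, integral_smul_measure,
      ENNReal.toReal_ofReal hl0.le, ENNReal.toReal_ofReal hl1'.le, smul_eq_mul, smul_eq_mul]
  -- notation
  set g1 : Ω → ℝ := ν[f1|m] with hg1
  set g2 : Ω → ℝ := ν[f2|m] with hg2
  set e1 : Ω → ℝ := P1[ξ|m] with he1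
  set e2 : Ω → ℝ := P2[ξ|m] with he2
  set η : Ω → ℝ := ν[ξ|m] with hη
  have hint_f1 : Integrable f1 ν := Measure.integrable_toReal_rnDeriv
  have hint_f2 : Integrable f2 ν := Measure.integrable_toReal_rnDeriv
  -- Part 1
  have part1 : ∀ᵐ ω ∂ν, lam * g1 ω + (1 - lam) * g2 ω = 1 := by
    have ea : ν[lam • f1 + (1 - lam) • f2|m] =ᵐ[ν] lam • g1 + (1 - lam) • g2 :=
      (condExp_add (hint_f1.smul lam) (hint_f2.smul (1 - lam)) _).trans
        ((condExp_smul lam f1 m).add (condExp_smul (1 - lam) f2 m))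
    have eb : ν[lam • f1 + (1 - lam) • f2|m] =ᵐ[ν] fun _ => (1:ℝ) := by
      refine (condExp_congr_ae (g := fun _ => (1:ℝ)) ?_).trans ?_
      · filter_upwards [hcomb] with ω hω
        simpa using hω
      · rw [condExp_const hm (1:ℝ)]
    filter_upwards [ea.symm.trans eb] with ω hω
    simpa using hω
  -- Bayes
  have hB1 : ν[fun ω => f1 ω * ξ ω|m] =ᵐ[ν] fun ω => e1 ω * g1 ω :=
    bayes_aux hm P1 ν hP1ν (hξ1.integrable one_le_two)
  have hB2 : ν[fun ω => f2 ω * ξ ω|m] =ᵐ[ν] fun ω => e2 ω * g2 ω :=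
    bayes_aux hm P2 ν hP2ν (hξ2.integrable one_le_two)
  -- Part 2
  have hfξ1 : Integrable (fun ω => f1 ω * ξ ω) ν := by
    simpa [smul_eq_mul] using
      (integrable_rnDeriv_smul_iff hP1ν).mpr (hξ1.integrable one_le_two)
  have hfξ2 : Integrable (fun ω => f2 ω * ξ ω) ν := by
    simpa [smul_eq_mul] using
      (integrable_rnDeriv_smul_iff hP2ν).mpr (hξ2.integrable one_le_two)
  have part2 : η =ᵐ[ν] fun ω => lam * g1 ω * e1 ω + (1 - lam) * g2 ω * e2 ω := by
    have hxi : ξ =ᵐ[ν] lam • (fun ω => f1 ω * ξ ω) + (1 - lam) • (fun ω => f2 ω * ξ ω) := by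
      filter_upwards [hcomb] with ω hω
      show ξ ω = lam * (f1 ω * ξ ω) + (1 - lam) * (f2 ω * ξ ω)
      linear_combination ξ ω * hω.symm
    have ha : η =ᵐ[ν]
        ν[lam • (fun ω => f1 ω * ξ ω) + (1 - lam) • (fun ω => f2 ω * ξ ω)|m] :=
      condExp_congr_ae hxi
    have hb : ν[lam • (fun ω => f1 ω * ξ ω) + (1 - lam) • (fun ω => f2 ω * ξ ω)|m]
        =ᵐ[ν] lam • ν[fun ω => f1 ω * ξ ω|m] + (1 - lam) • ν[fun ω => f2 ω * ξ ω|m] :=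
      (condExp_add (hfξ1.smul lam) (hfξ2.smul (1 - lam)) _).trans
        ((condExp_smul lam _ m).add (condExp_smul (1 - lam) _ m))
    filter_upwards [ha.trans hb, hB1, hB2] with ω hω hb1 hb2
    simp only [Pi.add_apply, Pi.smul_apply, smul_eq_mul] at hω
    rw [hω, hb1, hb2]
    ring
  -- Part 3 memberships
  have he1L2 : MemLp e1 2 P1 := memL2_condexp hm P1 hξ1
  have he2L2 : MemLp e2 2 P2 := memL2_condexp hm P2 hξ2
  have hηL2ν : MemLp η 2 ν := memL2_condexp hm ν hξν
  have hηP1 : MemLp η 2 P1 := htransfer1 hηL2ν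
  have hηP2 : MemLp η 2 P2 := htransfer2 hηL2ν
  -- cross terms vanish
  have hcross : ∀ (P : @Measure Ω m0) (_ : IsProbabilityMeasure P) (e : Ω → ℝ)
      (hξP : MemLp ξ 2 P) (heP : e = P[ξ|m]) (hηP : MemLp η 2 P),
      ∫ ω, (ξ ω - e ω) * (e ω - η ω) ∂P = 0 := by
    intro P _ e hξP heP hηP
    have heL2 : MemLp e 2 P := heP ▸ memL2_condexp hm P hξP
    have hwm : StronglyMeasurable[m] (fun ω => e ω - η ω) := by
      rw [heP, hη]
      exact stronglyMeasurable_condExp.sub stronglyMeasurable_condExp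
    have hwint : Integrable (fun ω => (e ω - η ω) * (ξ ω - e ω)) P :=
      integrable_mul_of_memL2 (heL2.sub hηP) (hξP.sub heL2)
    have hmul : P[(fun ω => e ω - η ω) * (fun ω => ξ ω - e ω)|m]
        =ᵐ[P] (fun ω => e ω - η ω) * P[fun ω => ξ ω - e ω|m] :=
      condExp_mul_of_stronglyMeasurable_left hwm hwint
        ((hξP.integrable one_le_two).sub (heP ▸ integrable_condExp))
    have h0 : P[fun ω => ξ ω - e ω|m] =ᵐ[P] 0 := by
      have hsub : P[ξ - e|m] =ᵐ[P] P[ξ|m] - P[e|m] :=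
        condExp_sub (hξP.integrable one_le_two) (heP ▸ integrable_condExp) _
      have hee : P[e|m] =ᵐ[P] e := by
        rw [heP]
        exact condExp_condExp_of_le le_rfl hm
      filter_upwards [hsub, hee] with ω hω1 hω2
      have : (ξ - e) = (fun ω => ξ ω - e ω) := rfl
      rw [← this]
      simp only [Pi.sub_apply] at hω1 ⊢
      rw [hω1, hω2, ← heP, sub_self]
      rfl
    have hz : P[(fun ω => e ω - η ω) * (fun ω => ξ ω - e ω)|m] =ᵐ[P] 0 := by
      filter_upwards [hmul, h0] with ω hω1 hω2
      simp only [Pi.mul_apply] at hω1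
      rw [hω1, hω2]
      simp
    calc ∫ ω, (ξ ω - e ω) * (e ω - η ω) ∂P
        = ∫ ω, ((fun ω => e ω - η ω) * (fun ω => ξ ω - e ω)) ω ∂P := by
          congr 1; funext ω; simp [mul_comm]
      _ = ∫ ω, (P[(fun ω => e ω - η ω) * (fun ω => ξ ω - e ω)|m]) ω ∂P :=
          (integral_condExp hm).symm
      _ = 0 := by rw [integral_congr_ae hz]; simp
  -- pointwise algebraic identities (a.e.)
  have hsq1 : ∀ᵐ ω ∂P1, (e1 ω - η ω) ^ 2
      = ((1 - lam) * g2 ω) ^ 2 * (e1 ω - e2 ω) ^ 2 := by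
    filter_upwards [hP1ν.ae_le part1, hP1ν.ae_le part2] with ω h1ω h2ω
    have : e1 ω - η ω = (1 - lam) * g2 ω * (e1 ω - e2 ω) := by
      rw [h2ω]
      linear_combination e1 ω * h1ω.symm
    rw [this, mul_pow]
  have hsq2 : ∀ᵐ ω ∂P2, (e2 ω - η ω) ^ 2
      = (lam * g1 ω) ^ 2 * (e1 ω - e2 ω) ^ 2 := by
    filter_upwards [hP2ν.ae_le part1, hP2ν.ae_le part2] with ω h1ω h2ω
    have : e2 ω - η ω = -(lam * g1 ω * (e1 ω - e2 ω)) := by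
      rw [h2ω]
      linear_combination e2 ω * h1ω.symm
    rw [this, neg_pow, mul_pow]
    ring
  -- expansions
  have hexp : ∀ (P : @Measure Ω m0) (_ : IsProbabilityMeasure P) (e : Ω → ℝ)
      (hξP : MemLp ξ 2 P) (heP : e = P[ξ|m]) (hηP : MemLp η 2 P),
      ∫ ω, (ξ ω - η ω) ^ 2 ∂P
        = (∫ ω, (ξ ω - e ω) ^ 2 ∂P) + ∫ ω, (e ω - η ω) ^ 2 ∂P := by
    intro P _ e hξP heP hηP
    have heL2 : MemLp e 2 P := heP ▸ memL2_condexp hm P hξP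
    have I1 : Integrable (fun ω => (ξ ω - e ω) ^ 2) P := integrable_sq_of_memL2 (hξP.sub heL2)
    have I2 : Integrable (fun ω => (ξ ω - e ω) * (e ω - η ω)) P :=
      integrable_mul_of_memL2 (hξP.sub heL2) (heL2.sub hηP)
    have I2' : Integrable (fun ω => 2 * ((ξ ω - e ω) * (e ω - η ω))) P := I2.const_mul 2
    have I3 : Integrable (fun ω => (e ω - η ω) ^ 2) P := integrable_sq_of_memL2 (heL2.sub hηP)
    have h23 : Integrable (fun ω => 2 * ((ξ ω - e ω) * (e ω - η ω)) + (e ω - η ω) ^ 2) P :=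
      I2'.add I3
    have step0 : ∫ ω, (ξ ω - η ω) ^ 2 ∂P
        = ∫ ω, ((ξ ω - e ω) ^ 2 + (2 * ((ξ ω - e ω) * (e ω - η ω)) + (e ω - η ω) ^ 2)) ∂P :=
      integral_congr_ae (Filter.Eventually.of_forall fun ω => by ring)
    have step1 : ∫ ω, ((ξ ω - e ω) ^ 2 + (2 * ((ξ ω - e ω) * (e ω - η ω)) + (e ω - η ω) ^ 2)) ∂P
        = (∫ ω, (ξ ω - e ω) ^ 2 ∂P)
          + ∫ ω, (2 * ((ξ ω - e ω) * (e ω - η ω)) + (e ω - η ω) ^ 2) ∂P :=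
      integral_add I1 h23
    have step2 : ∫ ω, (2 * ((ξ ω - e ω) * (e ω - η ω)) + (e ω - η ω) ^ 2) ∂P
        = (∫ ω, 2 * ((ξ ω - e ω) * (e ω - η ω)) ∂P) + ∫ ω, (e ω - η ω) ^ 2 ∂P :=
      integral_add I2' I3
    have step3 : ∫ ω, 2 * ((ξ ω - e ω) * (e ω - η ω)) ∂P
        = 2 * ∫ ω, (ξ ω - e ω) * (e ω - η ω) ∂P := integral_const_mul 2 _
    rw [step0, step1, step2, step3, hcross P inferInstance e hξP heP hηP]
    ring
  have hexp1 := hexp P1 inferInstance e1 hξ1 he1 hηP1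
  have hexp2 := hexp P2 inferInstance e2 hξ2 he2 hηP2
  -- assemble
  refine ⟨part1, part2, ?_⟩
  have hIν1 : Integrable (fun ω => (ξ ω - η ω) ^ 2) P1 :=
    integrable_sq_of_memL2 (hξ1.sub hηP1)
  have hIν2 : Integrable (fun ω => (ξ ω - η ω) ^ 2) P2 :=
    integrable_sq_of_memL2 (hξ2.sub hηP2)
  rw [hint_split hIν1 hIν2, hexp1, hexp2,
    integral_congr_ae hsq1, integral_congr_ae hsq2]
  ring
end

section
/- (Properties of the robust MMSE.) Let $\rho$ be a stable, proper, normalized convex operator on $L^p_{\mathcal{F}}(\mathbb{P})$ with representation set $\mathcal{P}$, and for $\xi\in L^{4p}(\mathbb{P})$ let $\rho(\xi|\mathcal{C})$ denote the unique minimizer of $\eta\mapsto\rho((\xi-\eta)^2)$ over $\mathcal{C}$-measurable $\eta\in L^{2p}(\mathbb{P})$, which satisfies $\rho(\xi|\mathcal{C})=E_{\hat P}[\xi|\mathcal{C}]$ for some $\hat P\in\mathcal{P}$. Then: (i) if $C_1\le\xi\le C_2$ a.s. for constants, then $C_1\le\rho(\xi|\mathcal{C})\le C_2$; (ii) $\rho(-\xi|\mathcal{C})=-\rho(\xi|\mathcal{C})$;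 (iii) $\rho(\xi+\eta_0|\mathcal{C})=\rho(\xi|\mathcal{C})+\eta_0$ for any $\mathcal{C}$-measurable $\eta_0\in L^{2p}(\mathbb{P})$; (iv) if $\xi$ is independent of $\mathcal{C}$ under every $P\in\mathcal{P}$, then $\rho(\xi|\mathcal{C})$ is a.s. constant. -/
open MeasureTheory
open scoped ENNReal

section Aux

lemma aux_condexp_pos {Ω : Type*} {m : MeasurableSpace Ω} [m0 : MeasurableSpace Ω] (μ : Measure Ω)
    [IsProbabilityMeasure μ] (hm : m ≤ m0) {f : Ω → ℝ}
    (hfint : Integrable f μ) (hfpos : ∀ᵐ ω ∂μ, 0 < f ω) :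
    ∀ᵐ ω ∂μ, 0 < (μ[f|m]) ω := by
  set g := μ[f|m] with hg
  set A : Set Ω := g ⁻¹' (Set.Iic 0) with hA
  have hAm : MeasurableSet[m] A := stronglyMeasurable_condExp.measurable measurableSet_Iic
  have hAm0 : MeasurableSet[m0] A := hm _ hAm
  have h1 : ∫ ω in A, g ω ∂μ = ∫ ω in A, f ω ∂μ := setIntegral_condExp hm hfint hAm
  have h2 : ∫ ω in A, g ω ∂μ ≤ 0 :=
    setIntegral_nonpos (μ := μ) hAm0 (fun ω hω => hω)
  have hμA : μ A = 0 := by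
    by_contra hne
    have hsupp : (Function.support f ∩ A : Set Ω) =ᵐ[μ] A := by
      rw [Filter.eventuallyEq_set]
      filter_upwards [hfpos] with ω hω
      simp [Function.mem_support, ne_of_gt hω]
    have hpos : 0 < ∫ ω in A, f ω ∂μ := by
      have hnn : 0 ≤ᵐ[μ.restrict A] f := ae_restrict_of_ae (hfpos.mono fun ω h => h.le)
      have hio : IntegrableOn f A μ := hfint.integrableOn
      rw [setIntegral_pos_iff_support_of_nonneg_ae hnn hio]
      rw [measure_congr hsupp]
      exact lt_of_le_of_ne zero_le (Ne.symm hne)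
    rw [h1] at h2
    exact absurd (h2.trans_lt hpos) (lt_irrefl _)
  rw [ae_iff]
  convert hμA using 2
  ext ω
  simp [hA, not_lt]

lemma aux_integrable_mul {Ω : Type*} {m0 : MeasurableSpace Ω} {μ : Measure Ω}
    {p q : ℝ} (hpq : p.HolderConjugate q) {g f : Ω → ℝ}
    (hg : MemLp g (ENNReal.ofReal p) μ) (hf : MemLp f (ENNReal.ofReal q) μ) :
    Integrable (fun ω => g ω * f ω) μ := by
  have hpqr : (1 : ℝ≥0∞) / 1 = 1 / ENNReal.ofReal q + 1 / ENNReal.ofReal p := by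
    simp only [one_div]
    rw [← ENNReal.ofReal_inv_of_pos hpq.symm.pos, ← ENNReal.ofReal_inv_of_pos hpq.pos,
      ← ENNReal.ofReal_add (inv_nonneg.mpr hpq.symm.nonneg) (inv_nonneg.mpr hpq.nonneg), hpq.symm.inv_add_inv_eq_one]
    simp
  have h : MemLp (f • g) 1 μ := hg.smul hf (hpqr := ⟨by simpa [one_div] using hpqr.symm⟩)
  exact (memLp_one_iff_integrable.mp h).congr
    (Filter.Eventually.of_forall fun ω => mul_comm (f ω) (g ω))

lemma aux_indep_setIntegral {Ω : Type*} {m : MeasurableSpace Ω} [m0 : MeasurableSpace Ω]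
    (μ : Measure Ω) [IsProbabilityMeasure μ] (hm : m ≤ m0) {ξ f : Ω → ℝ}
    (hfmeas : AEMeasurable f μ) (hfpos : ∀ᵐ ω ∂μ, 0 < f ω) (hfint : Integrable f μ)
    (hfone : (∫ ω, f ω ∂μ) = 1)
    (hξf : Integrable (fun ω => ξ ω * f ω) μ)
    (hindep : ProbabilityTheory.Indep (MeasurableSpace.comap ξ inferInstance) m
      (μ.withDensity fun ω => ENNReal.ofReal (f ω)))
    {s : Set Ω} (hs : MeasurableSet[m] s) :
    ∫ ω in s, ξ ω * f ω ∂μ = (∫ ω, ξ ω * f ω ∂μ) * ∫ ω in s, f ω ∂μ := by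
  set P : Measure Ω := μ.withDensity fun ω => ENNReal.ofReal (f ω) with hP
  have hs0 : MeasurableSet[m0] s := hm _ hs
  have hf' : AEMeasurable (fun ω => Real.toNNReal (f ω)) μ :=
    measurable_real_toNNReal.comp_aemeasurable hfmeas
  have hfnn : ∀ᵐ ω ∂μ, 0 ≤ f ω := hfpos.mono fun ω h => h.le
  -- P is a probability measure
  haveI hPprob : IsProbabilityMeasure P := by
    constructor
    rw [hP, withDensity_apply _ MeasurableSet.univ, setLIntegral_univ,
      ← ofReal_integral_eq_lintegral_ofReal hfint hfnn, hfone, ENNReal.ofReal_one]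
  -- ξ is integrable under P
  have hξP : Integrable ξ P := by
    rw [hP]
    refine (integrable_withDensity_iff_integrable_smul₀ hf').mpr ?_
    refine hξf.congr ?_
    filter_upwards [hfnn] with ω h
    simp [NNReal.smul_def, Real.coe_toNNReal _ h, mul_comm]
  -- independence of ξ and the indicator of s under P
  have hindmeas : Measurable[m] (s.indicator fun _ => (1 : ℝ)) :=
    measurable_const.indicator hs
  have hIF : ProbabilityTheory.IndepFun ξ (s.indicator fun _ => (1 : ℝ)) P := by
    rw [ProbabilityTheory.IndepFun_iff_Indep]
    exact ProbabilityTheory.indep_of_indep_of_le_right hindep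
      (measurable_iff_comap_le.mp hindmeas)
  have h1int : Integrable (s.indicator fun _ => (1 : ℝ)) P :=
    (integrable_const (1 : ℝ)).indicator hs0
  have hmul := hIF.integral_mul_eq_mul_integral hξP.aestronglyMeasurable h1int.aestronglyMeasurable
  have hprod : (ξ * s.indicator fun _ => (1 : ℝ)) = s.indicator ξ := by
    funext ω; by_cases h : ω ∈ s <;> simp [h]
  rw [hprod, integral_indicator hs0] at hmul
  have hindint : ∫ ω, s.indicator (fun _ => (1 : ℝ)) ω ∂P = (P s).toReal := by
    rw [integral_indicator hs0, setIntegral_const]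
    simp [Measure.real]
  rw [hindint] at hmul
  -- translate the three quantities back to μ
  have htot : ∫ ω, ξ ω ∂P = ∫ ω, ξ ω * f ω ∂μ := by
    have h1 : ∫ ω, ξ ω ∂P = ∫ ω, (f ω).toNNReal • ξ ω ∂μ :=
      integral_withDensity_eq_integral_smul₀ hf' ξ
    rw [h1]
    refine integral_congr_ae ?_
    filter_upwards [hfnn] with ω h
    simp [NNReal.smul_def, Real.coe_toNNReal _ h, mul_comm]
  have hset : ∫ ω in s, ξ ω ∂P = ∫ ω in s, ξ ω * f ω ∂μ := by
    have h1 : ∫ ω in s, ξ ω ∂P = ∫ ω in s, (f ω).toNNReal • ξ ω ∂μ :=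
      setIntegral_withDensity_eq_setIntegral_smul₀ (hf'.restrict) ξ hs0
    rw [h1]
    refine integral_congr_ae ?_
    filter_upwards [ae_restrict_of_ae hfnn] with ω h
    simp [NNReal.smul_def, Real.coe_toNNReal _ h, mul_comm]
  have hPs : (P s).toReal = ∫ ω in s, f ω ∂μ := by
    rw [hP, withDensity_apply _ hs0,
      ← ofReal_integral_eq_lintegral_ofReal hfint.integrableOn (ae_restrict_of_ae hfnn)]
    exact ENNReal.toReal_ofReal (integral_nonneg_of_ae (ae_restrict_of_ae hfnn))
  rw [hset, htot, hPs] at hmul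
  exact hmul

lemma aux_bound {Ω : Type*} {m : MeasurableSpace Ω} {m0 : MeasurableSpace Ω}
    (μ : Measure Ω) [IsProbabilityMeasure μ] (hm : m ≤ m0) {ξ f : Ω → ℝ}
    (hfpos : ∀ᵐ ω ∂μ, 0 < f ω) (hfint : Integrable f μ)
    (hξf : Integrable (fun ω => ξ ω * f ω) μ) {C1 C2 : ℝ}
    (hC : ∀ᵐ ω ∂μ, C1 ≤ ξ ω ∧ ξ ω ≤ C2) :
    ∀ᵐ ω ∂μ, C1 ≤ (μ[fun ω' => ξ ω' * f ω'|m]) ω / (μ[f|m]) ω ∧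
      (μ[fun ω' => ξ ω' * f ω'|m]) ω / (μ[f|m]) ω ≤ C2 := by
  have hC1f : Integrable (fun ω => C1 * f ω) μ := hfint.const_mul C1
  have hC2f : Integrable (fun ω => C2 * f ω) μ := hfint.const_mul C2
  have hgpos : ∀ᵐ ω ∂μ, 0 < (μ[f|m]) ω := aux_condexp_pos μ hm hfint hfpos
  have hle1 : (fun ω => C1 * f ω) ≤ᵐ[μ] fun ω => ξ ω * f ω := by
    filter_upwards [hC, hfpos] with ω h1 h2
    exact mul_le_mul_of_nonneg_right h1.1 h2.le
  have hle2 : (fun ω => ξ ω * f ω) ≤ᵐ[μ] fun ω => C2 * f ω := by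
    filter_upwards [hC, hfpos] with ω h1 h2
    exact mul_le_mul_of_nonneg_right h1.2 h2.le
  have hm1 : μ[fun ω => C1 * f ω|m] ≤ᵐ[μ] μ[fun ω => ξ ω * f ω|m] :=
    condExp_mono hC1f hξf hle1
  have hm2 : μ[fun ω => ξ ω * f ω|m] ≤ᵐ[μ] μ[fun ω => C2 * f ω|m] :=
    condExp_mono hξf hC2f hle2
  have he1 : μ[fun ω => C1 * f ω|m] =ᵐ[μ] fun ω => C1 * (μ[f|m]) ω := condExp_smul C1 f m
  have he2 : μ[fun ω => C2 * f ω|m] =ᵐ[μ] fun ω => C2 * (μ[f|m]) ω := condExp_smul C2 f m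
  filter_upwards [hm1, hm2, he1, he2, hgpos] with ω h1 h2 h3 h4 h5
  rw [h3] at h1
  rw [h4] at h2
  constructor
  · rw [le_div_iff₀ h5]; exact h1
  · rw [div_le_iff₀ h5]; exact h2

lemma aux_bayes_const {Ω : Type*} {m : MeasurableSpace Ω} {m0 : MeasurableSpace Ω}
    (μ : Measure Ω) [IsProbabilityMeasure μ] (hm : m ≤ m0) {ξ f : Ω → ℝ}
    (hfmeas : AEMeasurable f μ) (hfpos : ∀ᵐ ω ∂μ, 0 < f ω) (hfint : Integrable f μ)
    (hfone : (∫ ω, f ω ∂μ) = 1)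
    (hξf : Integrable (fun ω => ξ ω * f ω) μ)
    (hindep : ProbabilityTheory.Indep (MeasurableSpace.comap ξ inferInstance) m
      (μ.withDensity fun ω => ENNReal.ofReal (f ω))) :
    (fun ω => (μ[fun ω' => ξ ω' * f ω'|m]) ω / (μ[f|m]) ω) =ᵐ[μ]
      fun _ => ∫ ω, ξ ω * f ω ∂μ := by
  set c : ℝ := ∫ ω, ξ ω * f ω ∂μ with hc
  have hkey : ∀ s : Set Ω, MeasurableSet[m] s →
      ∫ ω in s, ξ ω * f ω ∂μ = c * ∫ ω in s, f ω ∂μ := fun s hs =>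
    aux_indep_setIntegral μ hm hfmeas hfpos hfint hfone hξf hindep hs
  have hgmeas : AEStronglyMeasurable[m] (fun ω => c * (μ[f|m]) ω) μ :=
    AEStronglyMeasurable.const_smul ⟨μ[f|m], stronglyMeasurable_condExp,
      Filter.EventuallyEq.rfl⟩ c
  have heq : (fun ω => c * (μ[f|m]) ω) =ᵐ[μ] μ[fun ω' => ξ ω' * f ω'|m] :=
    ae_eq_condExp_of_forall_setIntegral_eq hm hξf
      (fun s _ _ => (integrable_condExp.const_mul c).integrableOn)
      (fun s hs _ => by
        rw [integral_const_mul, setIntegral_condExp hm hfint hs]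
        exact (hkey s hs).symm)
      hgmeas
  have hgpos : ∀ᵐ ω ∂μ, 0 < (μ[f|m]) ω := aux_condexp_pos μ hm hfint hfpos
  filter_upwards [heq, hgpos] with ω h1 h2
  rw [← h1]
  field_simp

end Aux

/-- The convex operator associated with a set `D` of densities and a penalty `α`:
`ρ(ζ) = sup_{f ∈ D} (E[ζ f] - α(f))`. -/
noncomputable def rhoOp {Ω : Type*} {mΩ : MeasurableSpace Ω} (μ : Measure Ω)
    (D : Set (Ω → ℝ)) (α : (Ω → ℝ) → ℝ) (ζ : Ω → ℝ) : ℝ :=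
  sSup {x : ℝ | ∃ f ∈ D, x = (∫ ω, ζ ω * f ω ∂μ) - α f}

/-- properties of the robust MMSE `ρ(ξ|C)`.
Here `ρ` is a stable, proper, normalized convex operator given by its dual
representation over the density set `D` with penalty `α`; `condRho ξ` denotes the
(unique) minimizer of `η ↦ ρ((ξ-η)²)` over `C`-measurable `η ∈ L^{2p}`, which is of
the form `E_{P̂}[ξ|C]` for some `P̂ ∈ 𝒫`.  Then:
(i) `C₁ ≤ ξ ≤ C₂` a.s. implies `C₁ ≤ ρ(ξ|C) ≤ C₂` a.s.;
(ii) `ρ(-ξ|C) = -ρ(ξ|C)`;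
(iii) `ρ(ξ+η₀|C) = ρ(ξ|C) + η₀` for `C`-measurable `η₀ ∈ L^{2p}`;
(iv) if `ξ` is independent of `C` under every `P ∈ 𝒫`, then `ρ(ξ|C)` is a.s. constant. -/
theorem stmt17 {Ω : Type*} [m0 : MeasurableSpace Ω] (μ : Measure Ω) [IsProbabilityMeasure μ]
    (p q : ℝ) (hp1 : 1 < p) (hp2 : p ≤ 2) (hpq : p.HolderConjugate q)
    (m : MeasurableSpace Ω) (hm : m ≤ m0)
    (D : Set (Ω → ℝ)) (hDne : D.Nonempty)
    -- proper priors: strictly positive probability densities in `L^q`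
    (hD : ∀ f ∈ D, (∀ᵐ ω ∂μ, 0 < f ω) ∧ Integrable f μ ∧ (∫ ω, f ω ∂μ) = 1 ∧
      MemLp f (ENNReal.ofReal q) μ)
    -- stability of the representation set
    (hstable : ∀ f ∈ D, (fun ω => f ω / (μ[f | m]) ω) ∈ D)
    (α : (Ω → ℝ) → ℝ)
    -- normalization `ρ(0) = 0`
    (hnorm : rhoOp μ D α (fun _ => 0) = 0)
    -- the robust conditional estimator and its defining properties
    (condRho : (Ω → ℝ) → (Ω → ℝ))
    (hmeas : ∀ ξ : Ω → ℝ, MemLp ξ (ENNReal.ofReal (4 * p)) μ →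
      AEStronglyMeasurable[m] (condRho ξ) μ ∧ MemLp (condRho ξ) (ENNReal.ofReal (2 * p)) μ)
    (hmin : ∀ ξ : Ω → ℝ, MemLp ξ (ENNReal.ofReal (4 * p)) μ →
      ∀ η : Ω → ℝ, MemLp η (ENNReal.ofReal (2 * p)) μ → AEStronglyMeasurable[m] η μ →
        rhoOp μ D α (fun ω => (ξ ω - condRho ξ ω) ^ 2) ≤
          rhoOp μ D α (fun ω => (ξ ω - η ω) ^ 2))
    (huniq : ∀ ξ : Ω → ℝ, MemLp ξ (ENNReal.ofReal (4 * p)) μ →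
      ∀ η : Ω → ℝ, MemLp η (ENNReal.ofReal (2 * p)) μ → AEStronglyMeasurable[m] η μ →
        rhoOp μ D α (fun ω => (ξ ω - η ω) ^ 2) =
          rhoOp μ D α (fun ω => (ξ ω - condRho ξ ω) ^ 2) →
        η =ᵐ[μ] condRho ξ)
    (hrep : ∀ ξ : Ω → ℝ, MemLp ξ (ENNReal.ofReal (4 * p)) μ →
      ∃ f ∈ D, condRho ξ =ᵐ[μ] fun ω => (μ[fun ω' => ξ ω' * f ω' | m]) ω / (μ[f | m]) ω)
    (ξ : Ω → ℝ) (hξ : MemLp ξ (ENNReal.ofReal (4 * p)) μ) :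
    -- (i)
    (∀ C1 C2 : ℝ, (∀ᵐ ω ∂μ, C1 ≤ ξ ω ∧ ξ ω ≤ C2) →
      ∀ᵐ ω ∂μ, C1 ≤ condRho ξ ω ∧ condRho ξ ω ≤ C2) ∧
    -- (ii)
    (condRho (fun ω => -ξ ω) =ᵐ[μ] fun ω => -condRho ξ ω) ∧
    -- (iii)
    (∀ η0 : Ω → ℝ, MemLp η0 (ENNReal.ofReal (2 * p)) μ → AEStronglyMeasurable[m] η0 μ →
      MemLp (fun ω => ξ ω + η0 ω) (ENNReal.ofReal (4 * p)) μ →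
      condRho (fun ω => ξ ω + η0 ω) =ᵐ[μ] fun ω => condRho ξ ω + η0 ω) ∧
    -- (iv)
    ((∀ f ∈ D, ProbabilityTheory.Indep (MeasurableSpace.comap ξ inferInstance) m
        (μ.withDensity fun ω => ENNReal.ofReal (f ω))) →
      ∃ c : ℝ, condRho ξ =ᵐ[μ] fun _ => c) := by
  have hp0 : (0:ℝ) < p := lt_trans one_pos hp1
  have h42 : ENNReal.ofReal (2 * p) ≤ ENNReal.ofReal (4 * p) :=
    ENNReal.ofReal_le_ofReal (by linarith)
  have hξp : MemLp ξ (ENNReal.ofReal p) μ :=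
    hξ.mono_exponent (ENNReal.ofReal_le_ofReal (by linarith))
  obtain ⟨hcξm, hcξL⟩ := hmeas ξ hξ
  refine ⟨?_, ?_, ?_, ?_⟩
  · -- (i)
    intro C1 C2 hC
    obtain ⟨f, hfD, hrepξ⟩ := hrep ξ hξ
    obtain ⟨hfpos, hfint, hfone, hfq⟩ := hD f hfD
    have hξf : Integrable (fun ω => ξ ω * f ω) μ := aux_integrable_mul hpq hξp hfq
    filter_upwards [hrepξ, aux_bound μ hm hfpos hfint hξf hC] with ω h0 h1
    rw [h0]
    exact h1
  · -- (ii)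
    have hξn : MemLp (fun ω => -ξ ω) (ENNReal.ofReal (4 * p)) μ := hξ.neg
    obtain ⟨hnm, hnL⟩ := hmeas (fun ω => -ξ ω) hξn
    have e1 : (fun ω => (-ξ ω - -condRho ξ ω) ^ 2) = fun ω => (ξ ω - condRho ξ ω) ^ 2 := by
      funext ω; ring
    have e2 : (fun ω => (ξ ω - -condRho (fun ω => -ξ ω) ω) ^ 2) =
        fun ω => (-ξ ω - condRho (fun ω => -ξ ω) ω) ^ 2 := by
      funext ω; ring
    have hmem1 : MemLp (fun ω => -condRho (fun ω => -ξ ω) ω) (ENNReal.ofReal (2 * p)) μ :=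
      hnL.neg
    have hmeas1 : AEStronglyMeasurable[m] (fun ω => -condRho (fun ω => -ξ ω) ω) μ := hnm.neg
    have hmem2 : MemLp (fun ω => -condRho ξ ω) (ENNReal.ofReal (2 * p)) μ := hcξL.neg
    have hmeas2 : AEStronglyMeasurable[m] (fun ω => -condRho ξ ω) μ := hcξm.neg
    have h1 := hmin ξ hξ _ hmem1 hmeas1
    rw [e2] at h1
    have h2 := hmin (fun ω => -ξ ω) hξn _ hmem2 hmeas2
    rw [e1] at h2
    have heq : rhoOp μ D α (fun ω => (-ξ ω - -condRho ξ ω) ^ 2) =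
        rhoOp μ D α (fun ω => (-ξ ω - condRho (fun ω => -ξ ω) ω) ^ 2) := by
      rw [e1]
      exact le_antisymm h1 h2
    exact (huniq (fun ω => -ξ ω) hξn _ hmem2 hmeas2 heq).symm
  · -- (iii)
    intro η0 hη0L hη0m hsum
    obtain ⟨hsm, hsL⟩ := hmeas (fun ω => ξ ω + η0 ω) hsum
    have e1 : (fun ω => (ξ ω + η0 ω - (condRho ξ ω + η0 ω)) ^ 2) =
        fun ω => (ξ ω - condRho ξ ω) ^ 2 := by
      funext ω; ring
    have e2 : (fun ω => (ξ ω - (condRho (fun ω => ξ ω + η0 ω) ω - η0 ω)) ^ 2) =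
        fun ω => (ξ ω + η0 ω - condRho (fun ω => ξ ω + η0 ω) ω) ^ 2 := by
      funext ω; ring
    have hmem1 : MemLp (fun ω => condRho (fun ω => ξ ω + η0 ω) ω - η0 ω)
        (ENNReal.ofReal (2 * p)) μ := hsL.sub hη0L
    have hmeas1 : AEStronglyMeasurable[m]
        (fun ω => condRho (fun ω => ξ ω + η0 ω) ω - η0 ω) μ := hsm.sub hη0m
    have hmem2 : MemLp (fun ω => condRho ξ ω + η0 ω) (ENNReal.ofReal (2 * p)) μ :=
      hcξL.add hη0L
    have hmeas2 : AEStronglyMeasurable[m] (fun ω => condRho ξ ω + η0 ω) μ := hcξm.add hη0m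
    have h1 := hmin ξ hξ _ hmem1 hmeas1
    rw [e2] at h1
    have h2 := hmin (fun ω => ξ ω + η0 ω) hsum _ hmem2 hmeas2
    rw [e1] at h2
    have heq : rhoOp μ D α (fun ω => (ξ ω + η0 ω - (condRho ξ ω + η0 ω)) ^ 2) =
        rhoOp μ D α (fun ω => (ξ ω + η0 ω - condRho (fun ω => ξ ω + η0 ω) ω) ^ 2) := by
      rw [e1]
      exact le_antisymm h1 h2
    exact (huniq (fun ω => ξ ω + η0 ω) hsum _ hmem2 hmeas2 heq).symm
  · -- (iv)
    intro hindep
    obtain ⟨f, hfD, hrepξ⟩ := hrep ξ hξ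
    obtain ⟨hfpos, hfint, hfone, hfq⟩ := hD f hfD
    have hξf : Integrable (fun ω => ξ ω * f ω) μ := aux_integrable_mul hpq hξp hfq
    exact ⟨∫ ω, ξ ω * f ω ∂μ,
      hrepξ.trans (aux_bayes_const μ hm hfq.aestronglyMeasurable.aemeasurable hfpos hfint
        hfone hξf (hindep f hfD))⟩
end
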